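/- Assume the dΔ-equalities: in every degree, Im(d∘Δ) = Im d ∩ Ker Δ = Im Δ ∩ Ker d. Then in every degree the d-cohomology and the Δ-cohomology of V are isomorphic: (Ker d ∩ V^k)/(Im d ∩ V^k) ≅ (Ker Δ ∩ V^k)/(Im Δ ∩ V^k), via the correspondence sending the class of an element of Ker d ∩ Ker Δ in d-cohomology to its class in Δ-cohomology (every class on either side has such a common representative, and the correspondence is well defined and bijective). -/

import Mathlib

set_option synthInstance.maxHeartbeats 1000000
set_option maxHeartbeats 1000000
open DirectSum

/-- A degree-zero graded map: replacing the argument by its degree-`m`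
component does not change the value, provided the value lies in degree `m`. -/
lemma graded_component_lemma
    {V : Type*} [AddCommGroup V] [Module ℂ V]
    (𝒱 : ℤ → Submodule ℂ V)
    (hinternal : DirectSum.IsInternal 𝒱)
    (L : V →ₗ[ℂ] V) (hL : ∀ j : ℤ, ∀ x ∈ 𝒱 j, L x ∈ 𝒱 j)
    (x : V) (m : ℤ) (hx : L x ∈ 𝒱 m) :
    ∃ y ∈ 𝒱 m, L y = L x := by
  letI : DirectSum.Decomposition 𝒱 := hinternal.chooseDecomposition
  refine ⟨(DirectSum.decompose 𝒱 x m : V), SetLike.coe_mem _, ?_⟩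
  have key : ∀ z : V, L ((DirectSum.decompose 𝒱 z m : V))
      = ((DirectSum.decompose 𝒱 (L z) m : V)) := by
    intro z
    induction z using DirectSum.Decomposition.inductionOn 𝒱 with
    | zero => simp
    | @homogeneous j u =>
        by_cases hj : j = m
        · subst hj
          rw [DirectSum.decompose_of_mem_same 𝒱 u.2,
            DirectSum.decompose_of_mem_same 𝒱 (hL j u u.2)]
        · rw [DirectSum.decompose_of_mem_ne 𝒱 u.2 hj,
            DirectSum.decompose_of_mem_ne 𝒱 (hL j u u.2) hj]
          simp
    | add a b ha hb =>
        simp only [map_add, DirectSum.decompose_add, DirectSum.add_apply, Submodule.coe_add, ha, hb]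
  rw [key x, DirectSum.decompose_of_mem_same 𝒱 hx]



/-- Let `V = ⊕ₖ V^k` be a ℤ-graded complex vector space with
`d` of degree `+1`, `Δ` of degree `-1`, `d∘d = 0`, `Δ∘Δ = 0` and
`d∘Δ + Δ∘d = 0`.  Assume the `dΔ`-equalities: in every degree,
`Im (d∘Δ) = Im d ∩ Ker Δ = Im Δ ∩ Ker d`.
Then in every degree the `d`-cohomology and the `Δ`-cohomology of `V` are
isomorphic via common representatives in `Ker d ∩ Ker Δ`: every class on
either side has such a representative, and for two common representatives
being `d`-cohomologous is equivalent to being `Δ`-cohomologous (so the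
correspondence is well defined and bijective). -/
theorem d_cohomology_iso_Delta_cohomology
    {V : Type*} [AddCommGroup V] [Module ℂ V]
    (𝒱 : ℤ → Submodule ℂ V)
    (hinternal : DirectSum.IsInternal 𝒱)
    (d Δ : V →ₗ[ℂ] V)
    (hd : ∀ (k : ℤ), ∀ x ∈ 𝒱 k, d x ∈ 𝒱 (k + 1))
    (hΔ : ∀ (k : ℤ), ∀ x ∈ 𝒱 k, Δ x ∈ 𝒱 (k - 1))
    (hdd : d ∘ₗ d = 0)
    (hΔΔ : Δ ∘ₗ Δ = 0)
    (hdΔ : d ∘ₗ Δ + Δ ∘ₗ d = 0)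
    (heq : ∀ k : ℤ,
      LinearMap.range (d ∘ₗ Δ) ⊓ 𝒱 k
        = LinearMap.range d ⊓ LinearMap.ker Δ ⊓ 𝒱 k)
    (heq' : ∀ k : ℤ,
      LinearMap.range (d ∘ₗ Δ) ⊓ 𝒱 k
        = LinearMap.range Δ ⊓ LinearMap.ker d ⊓ 𝒱 k) :
    ∀ k : ℤ,
      -- every `d`-cohomology class in `V^k` has a common representative
      (∀ α ∈ 𝒱 k, d α = 0 →
        ∃ β ∈ 𝒱 k, d β = 0 ∧ Δ β = 0 ∧ ∃ γ : V, α - β = d γ) ∧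
      -- every `Δ`-cohomology class in `V^k` has a common representative
      (∀ α ∈ 𝒱 k, Δ α = 0 →
        ∃ β ∈ 𝒱 k, d β = 0 ∧ Δ β = 0 ∧ ∃ γ : V, α - β = Δ γ) ∧
      -- the correspondence is well defined and bijective: for common
      -- representatives, `d`-cohomologous ↔ `Δ`-cohomologous
      (∀ α ∈ 𝒱 k, ∀ β ∈ 𝒱 k,
        d α = 0 → Δ α = 0 → d β = 0 → Δ β = 0 →
        ((∃ γ : V, α - β = d γ) ↔ (∃ γ : V, α - β = Δ γ))) := by
  have hanti : ∀ x : V, d (Δ x) = - Δ (d x) := by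
    intro x
    have h := congrFun (congrArg (DFunLike.coe) hdΔ) x
    simp only [LinearMap.add_apply, LinearMap.comp_apply, LinearMap.zero_apply] at h
    exact eq_neg_of_add_eq_zero_left h
  have hdd' : ∀ x : V, d (d x) = 0 := by
    intro x
    have h := congrFun (congrArg (DFunLike.coe) hdd) x
    simpa using h
  have hΔΔ' : ∀ x : V, Δ (Δ x) = 0 := by
    intro x
    have h := congrFun (congrArg (DFunLike.coe) hΔΔ) x
    simpa using h
  -- `d ∘ Δ` is graded of degree 0
  have hL : ∀ j : ℤ, ∀ x ∈ 𝒱 j, (d ∘ₗ Δ) x ∈ 𝒱 j := by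
    intro j x hx
    have := hd (j - 1) (Δ x) (hΔ j x hx)
    simpa using this
  intro k
  refine ⟨?_, ?_, ?_⟩
  · -- d-closed class has a harmonic representative
    intro α hα hdα
    have h1 : Δ α ∈ LinearMap.range (d ∘ₗ Δ) ⊓ 𝒱 (k - 1) := by
      rw [heq' (k - 1)]
      refine ⟨⟨⟨α, rfl⟩, ?_⟩, hΔ k α hα⟩
      show d (Δ α) = 0
      rw [hanti, hdα, map_zero, neg_zero]
    obtain ⟨⟨γ₀, hγ₀⟩, -⟩ := h1
    obtain ⟨y, hy, hLy⟩ := graded_component_lemma 𝒱 hinternal (d ∘ₗ Δ) hL γ₀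
      (k - 1) (hγ₀ ▸ hΔ k α hα)
    have hy' : d (Δ y) = Δ α := by
      have := hLy.trans hγ₀
      simpa using this
    have h3 : Δ (d y) = -Δ α := by rw [← hy', hanti, neg_neg]
    refine ⟨α + d y, ?_, ?_, ?_, -y, ?_⟩
    · exact Submodule.add_mem _ hα (by simpa using hd (k - 1) y hy)
    · rw [map_add, hdα, hdd' y, add_zero]
    · rw [map_add, h3, add_neg_cancel]
    · rw [map_neg]; abel
  · -- Δ-closed class has a harmonic representative
    intro α hα hΔα
    have h1 : d α ∈ LinearMap.range (d ∘ₗ Δ) ⊓ 𝒱 (k + 1) := by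
      rw [heq (k + 1)]
      refine ⟨⟨⟨α, rfl⟩, ?_⟩, hd k α hα⟩
      show Δ (d α) = 0
      have h2 := hanti α
      rw [hΔα, map_zero] at h2
      exact neg_eq_zero.mp h2.symm
    obtain ⟨⟨γ₀, hγ₀⟩, -⟩ := h1
    obtain ⟨y, hy, hLy⟩ := graded_component_lemma 𝒱 hinternal (d ∘ₗ Δ) hL γ₀
      (k + 1) (hγ₀ ▸ hd k α hα)
    have hy' : d (Δ y) = d α := by
      have := hLy.trans hγ₀
      simpa using this
    have hΔyk : Δ y ∈ 𝒱 k := by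
      have := hΔ (k + 1) y hy
      simpa using this
    refine ⟨α - Δ y, Submodule.sub_mem _ hα hΔyk, ?_, ?_, y, ?_⟩
    · rw [map_sub, hy', sub_self]
    · rw [map_sub, hΔα, hΔΔ' y, sub_zero]
    · abel
  · -- well-definedness and injectivity
    intro α hα β hβ hdα hΔα hdβ hΔβ
    have hmem : α - β ∈ 𝒱 k := Submodule.sub_mem _ hα hβ
    constructor
    · rintro ⟨γ, hγ⟩
      have h1 : α - β ∈ LinearMap.range d ⊓ LinearMap.ker Δ ⊓ 𝒱 k :=
        ⟨⟨⟨γ, hγ.symm⟩, by show Δ (α - β) = 0; rw [map_sub, hΔα, hΔβ, sub_self]⟩, hmem⟩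
      rw [← heq k] at h1
      obtain ⟨⟨x, hx⟩, -⟩ := h1
      refine ⟨-(d x), ?_⟩
      rw [map_neg, ← hanti x]
      exact (show d (Δ x) = α - β by simpa using hx).symm
    · rintro ⟨γ, hγ⟩
      have h1 : α - β ∈ LinearMap.range Δ ⊓ LinearMap.ker d ⊓ 𝒱 k :=
        ⟨⟨⟨γ, hγ.symm⟩, by show d (α - β) = 0; rw [map_sub, hdα, hdβ, sub_self]⟩, hmem⟩
      rw [← heq' k] at h1
      obtain ⟨⟨x, hx⟩, -⟩ := h1
      exact ⟨Δ x, (show d (Δ x) = α - β by simpa using hx).symm⟩
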